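/- Let z_j be independent Bernoulli(p_j) with p_j ∈ (0,1). For a nonempty finite set S, E[ (∑_{S'⊆S} g(S') ∏_{j∈S'} (z_j−p_j)/(p_j(1−p_j)))² ] over all subsets S' of S equals ∑_{S'⊆S} ( ∏_{j∈S'} (1−p_j)/p_j + ∏_{j∈S'} p_j/(1−p_j) − 2(−1)^{|S'|} ), where g(S') = ∏_{j∈S'}(1−p_j) − ∏_{j∈S'}(−p_j) and g(∅)=0. -/

import Mathlib

open Finset Real

/-- Value of a Bernoulli treatment bit as a real number. -/
noncomputable def zval : Bool → ℝ := fun b => if b then 1 else 0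

/-- Expectation of `f` under `n` mutually independent Bernoulli(`p j`) bits. -/
noncomputable def bexp {n : ℕ} (p : Fin n → ℝ) (f : (Fin n → Bool) → ℝ) : ℝ :=
  ∑ z : Fin n → Bool, (∏ j, if z j then p j else 1 - p j) * f z

/-- The SNIPE coefficient function `g`. -/
noncomputable def gcoef {n : ℕ} (p : Fin n → ℝ) (S : Finset (Fin n)) : ℝ :=
  if S.Nonempty then (∏ s ∈ S, (1 - p s)) - ∏ s ∈ S, (-p s) else 0

lemma bexp_prod {n : ℕ} (p : Fin n → ℝ) (w : Fin n → Bool → ℝ) :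
    bexp p (fun z => ∏ j, w j (z j)) = ∏ j, (p j * w j true + (1 - p j) * w j false) := by
  unfold bexp
  simp_rw [← Finset.prod_mul_distrib]
  rw [← Fintype.piFinset_univ,
    ← Finset.prod_univ_sum (fun _ : Fin n => (univ : Finset Bool))
      (fun j b => (if b then p j else 1 - p j) * w j b)]
  exact Finset.prod_congr rfl fun j _ => by simp

lemma bexp_sum {n : ℕ} (p : Fin n → ℝ) {ι : Type*} (s : Finset ι)
    (F : ι → (Fin n → Bool) → ℝ) :
    bexp p (fun z => ∑ a ∈ s, F a z) = ∑ a ∈ s, bexp p (F a) := by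
  unfold bexp
  simp_rw [Finset.mul_sum]
  rw [Finset.sum_comm]

lemma bexp_const_mul {n : ℕ} (p : Fin n → ℝ) (c : ℝ) (f : (Fin n → Bool) → ℝ) :
    bexp p (fun z => c * f z) = c * bexp p f := by
  unfold bexp
  rw [Finset.mul_sum]
  exact Finset.sum_congr rfl fun z _ => by ring

lemma orth {n : ℕ} (p : Fin n → ℝ) (hp : ∀ j, 0 < p j ∧ p j < 1)
    (A B : Finset (Fin n)) :
    bexp p (fun z => (∏ j ∈ A, ((zval (z j) - p j) / (p j * (1 - p j)))) *
                     (∏ j ∈ B, ((zval (z j) - p j) / (p j * (1 - p j))))) =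
    if A = B then ∏ j ∈ A, (1 / (p j * (1 - p j))) else 0 := by
  have key : ∀ z : Fin n → Bool,
      (∏ j ∈ A, ((zval (z j) - p j) / (p j * (1 - p j)))) *
      (∏ j ∈ B, ((zval (z j) - p j) / (p j * (1 - p j))))
      = ∏ j : Fin n,
          ((if j ∈ A then (zval (z j) - p j) / (p j * (1 - p j)) else 1) *
           (if j ∈ B then (zval (z j) - p j) / (p j * (1 - p j)) else 1)) := by
    intro z
    rw [Finset.prod_mul_distrib, Finset.prod_ite_mem, Finset.prod_ite_mem,
      Finset.univ_inter, Finset.univ_inter]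
  simp_rw [key]
  rw [bexp_prod p (fun j b =>
      (if j ∈ A then (zval b - p j) / (p j * (1 - p j)) else 1) *
      (if j ∈ B then (zval b - p j) / (p j * (1 - p j)) else 1))]
  have fac : ∀ j : Fin n,
      p j * ((if j ∈ A then (zval true - p j) / (p j * (1 - p j)) else 1) *
             (if j ∈ B then (zval true - p j) / (p j * (1 - p j)) else 1))
      + (1 - p j) * ((if j ∈ A then (zval false - p j) / (p j * (1 - p j)) else 1) *
             (if j ∈ B then (zval false - p j) / (p j * (1 - p j)) else 1))
      = if j ∈ A then (if j ∈ B then 1 / (p j * (1 - p j)) else 0)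
        else (if j ∈ B then 0 else 1) := by
    intro j
    obtain ⟨h0, h1⟩ := hp j
    have hne : p j ≠ 0 := ne_of_gt h0
    have hne1 : (1 : ℝ) - p j ≠ 0 := by linarith
    by_cases hA : j ∈ A <;> by_cases hB : j ∈ B <;>
      simp only [hA, hB, if_true, if_false, zval, Bool.false_eq_true] <;> (field_simp; try ring)
  simp_rw [fac]
  by_cases hAB : A = B
  · subst hAB
    rw [if_pos rfl]
    have hrw : (∏ x : Fin n, if x ∈ A then 1 / (p x * (1 - p x)) else 1)
        = ∏ j ∈ A, 1 / (p j * (1 - p j)) := by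
      rw [Finset.prod_ite_mem, Finset.univ_inter]
    rw [← hrw]
    exact Finset.prod_congr rfl fun j _ => by by_cases h : j ∈ A <;> simp [h]
  · rw [if_neg hAB]
    have : ∃ j, (j ∈ A ∧ j ∉ B) ∨ (j ∈ B ∧ j ∉ A) := by
      by_contra hcon
      push_neg at hcon
      exact hAB (Finset.ext fun j => ⟨(hcon j).1, (hcon j).2⟩)
    obtain ⟨j, hj⟩ := this
    apply Finset.prod_eq_zero (Finset.mem_univ j)
    rcases hj with ⟨h1, h2⟩ | ⟨h1, h2⟩ <;> simp [h1, h2]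

lemma diag {n : ℕ} (p : Fin n → ℝ) (hp : ∀ j, 0 < p j ∧ p j < 1) (A : Finset (Fin n)) :
    gcoef p A * gcoef p A * ∏ j ∈ A, (1 / (p j * (1 - p j)))
    = (∏ j ∈ A, ((1 - p j) / p j)) + (∏ j ∈ A, (p j / (1 - p j)))
      - 2 * (-1 : ℝ) ^ A.card := by
  rcases A.eq_empty_or_nonempty with h | h
  · simp [h, gcoef]; norm_num
  · have hne : ∀ j ∈ A, p j ≠ 0 ∧ (1:ℝ) - p j ≠ 0 := fun j _ =>
      ⟨ne_of_gt (hp j).1, by have := (hp j).2; linarith⟩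
    rw [gcoef, if_pos h]
    have e1 : (∏ j ∈ A, (1 - p j)) * (∏ j ∈ A, (1 - p j)) * ∏ j ∈ A, (1 / (p j * (1 - p j)))
        = ∏ j ∈ A, ((1 - p j) / p j) := by
      rw [← Finset.prod_mul_distrib, ← Finset.prod_mul_distrib]
      exact Finset.prod_congr rfl fun j hj => by
        obtain ⟨h0, h1⟩ := hne j hj; field_simp
    have e2 : (∏ j ∈ A, (-p j)) * (∏ j ∈ A, (-p j)) * ∏ j ∈ A, (1 / (p j * (1 - p j)))
        = ∏ j ∈ A, (p j / (1 - p j)) := by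
      rw [← Finset.prod_mul_distrib, ← Finset.prod_mul_distrib]
      exact Finset.prod_congr rfl fun j hj => by
        obtain ⟨h0, h1⟩ := hne j hj; field_simp
    have e3 : (∏ j ∈ A, (1 - p j)) * (∏ j ∈ A, (-p j)) * ∏ j ∈ A, (1 / (p j * (1 - p j)))
        = (-1 : ℝ) ^ A.card := by
      rw [← Finset.prod_mul_distrib, ← Finset.prod_mul_distrib, ← Finset.prod_const (-1 : ℝ)]
      exact Finset.prod_congr rfl fun j hj => by
        obtain ⟨h0, h1⟩ := hne j hj; field_simp
    nlinarith [e1, e2, e3]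

theorem stmt15 {n : ℕ} (p : Fin n → ℝ) (hp : ∀ j, 0 < p j ∧ p j < 1)
    (S : Finset (Fin n)) (hS : S.Nonempty) :
    bexp p (fun z =>
      (∑ S' ∈ S.powerset,
        gcoef p S' * ∏ j ∈ S', ((zval (z j) - p j) / (p j * (1 - p j)))) ^ 2)
    = ∑ S' ∈ S.powerset,
        ((∏ j ∈ S', ((1 - p j) / p j)) + (∏ j ∈ S', (p j / (1 - p j)))
          - 2 * (-1 : ℝ) ^ S'.card) := by
  have hfun : (fun z : Fin n → Bool =>
      (∑ S' ∈ S.powerset,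
        gcoef p S' * ∏ j ∈ S', ((zval (z j) - p j) / (p j * (1 - p j)))) ^ 2)
      = fun z => ∑ A ∈ S.powerset, ∑ B ∈ S.powerset,
          gcoef p A * gcoef p B *
          ((∏ j ∈ A, ((zval (z j) - p j) / (p j * (1 - p j)))) *
           (∏ j ∈ B, ((zval (z j) - p j) / (p j * (1 - p j))))) := by
    funext z
    rw [sq, Finset.sum_mul_sum]
    exact Finset.sum_congr rfl fun A _ => Finset.sum_congr rfl fun B _ => by ring
  rw [hfun, bexp_sum]
  have step : ∀ A ∈ S.powerset,
      bexp p (fun z => ∑ B ∈ S.powerset,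
          gcoef p A * gcoef p B *
          ((∏ j ∈ A, ((zval (z j) - p j) / (p j * (1 - p j)))) *
           (∏ j ∈ B, ((zval (z j) - p j) / (p j * (1 - p j))))))
      = (∏ j ∈ A, ((1 - p j) / p j)) + (∏ j ∈ A, (p j / (1 - p j)))
          - 2 * (-1 : ℝ) ^ A.card := by
    intro A hA
    rw [bexp_sum]
    have inner : ∀ B ∈ S.powerset,
        bexp p (fun z => gcoef p A * gcoef p B *
          ((∏ j ∈ A, ((zval (z j) - p j) / (p j * (1 - p j)))) *
           (∏ j ∈ B, ((zval (z j) - p j) / (p j * (1 - p j))))))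
        = gcoef p A * gcoef p B *
          (if A = B then ∏ j ∈ A, (1 / (p j * (1 - p j))) else 0) := by
      intro B _
      rw [bexp_const_mul, orth p hp A B]
    rw [Finset.sum_congr rfl inner]
    simp_rw [mul_ite, mul_zero]
    rw [Finset.sum_ite_eq S.powerset A
      (fun B => gcoef p A * gcoef p B * ∏ j ∈ A, (1 / (p j * (1 - p j)))), if_pos hA]
    exact diag p hp A
  exact Finset.sum_congr rfl step
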